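/- Let G be a finite graph with Laplacian L, S ⊂ V a Λ-set, U = V ∖ S, and 0 < ω < 1/Λ. Then there exist weights σ_u ∈ ℝ, u ∈ U, such that for every f ∈ E_ω(L), ∑_{v∈V} f(v) = ∑_{u∈U} f(u) σ_u. -/

import Mathlib

open Matrix

/-- The ℓ²-norm of a function on the vertices of a finite graph. -/
noncomputable def gnorm {V : Type*} [Fintype V] (f : V → ℝ) : ℝ :=
  Real.sqrt (∑ v, f v ^ 2)

/-- `E_ω(L)`: the span of eigenvectors of the combinatorial Laplacian `L`
whose eigenvalues are at most `ω`. -/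
noncomputable def Eomega {V : Type*} [Fintype V] [DecidableEq V]
    (G : SimpleGraph V) [DecidableRel G.Adj] (ω : ℝ) : Submodule ℝ (V → ℝ) :=
  Submodule.span ℝ
    {f : V → ℝ | f ≠ 0 ∧ ∃ μ : ℝ, μ ≤ ω ∧ (G.lapMatrix ℝ).mulVec f = μ • f}

private lemma gnorm_eq_sqrt_dot {V : Type*} [Fintype V] (f : V → ℝ) :
    gnorm f = Real.sqrt (f ⬝ᵥ f) := by
  simp [gnorm, dotProduct, sq]

private lemma dot_self_nonneg {V : Type*} [Fintype V] (f : V → ℝ) :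
    0 ≤ f ⬝ᵥ f :=
  Finset.sum_nonneg fun v _ => mul_self_nonneg (f v)

private lemma sum_dot {V ι : Type*} [Fintype V] (s : Finset ι) (u w : ι → V → ℝ) :
    (∑ i ∈ s, u i) ⬝ᵥ (∑ j ∈ s, w j) = ∑ i ∈ s, ∑ j ∈ s, u i ⬝ᵥ w j := by
  calc (∑ i ∈ s, u i) ⬝ᵥ (∑ j ∈ s, w j)
      = ∑ v, ∑ i ∈ s, ∑ j ∈ s, u i v * w j v := by
        simp only [dotProduct, Finset.sum_apply, Finset.sum_mul, Finset.mul_sum]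
        exact Finset.sum_congr rfl fun v _ => Finset.sum_comm
    _ = ∑ i ∈ s, ∑ v, ∑ j ∈ s, u i v * w j v := Finset.sum_comm
    _ = ∑ i ∈ s, ∑ j ∈ s, ∑ v, u i v * w j v :=
        Finset.sum_congr rfl fun i _ => Finset.sum_comm
    _ = ∑ i ∈ s, ∑ j ∈ s, u i ⬝ᵥ w j := rfl

private lemma eig_orth {V : Type*} [Fintype V] [DecidableEq V]
    (G : SimpleGraph V) [DecidableRel G.Adj] {f g : V → ℝ} {μ ν : ℝ}
    (hf : (G.lapMatrix ℝ).mulVec f = μ • f) (hg : (G.lapMatrix ℝ).mulVec g = ν • g)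
    (hne : μ ≠ ν) : f ⬝ᵥ g = 0 := by
  have hsym : ((G.lapMatrix ℝ).mulVec f) ⬝ᵥ g = f ⬝ᵥ ((G.lapMatrix ℝ).mulVec g) := by
    rw [dotProduct_mulVec, ← Matrix.mulVec_transpose,
      Matrix.IsSymm.eq (G.isSymm_lapMatrix ℝ)]
  rw [hf, hg, smul_dotProduct, dotProduct_smul, smul_eq_mul, smul_eq_mul] at hsym
  by_contra h
  exact hne (mul_right_cancel₀ h hsym)

private lemma lap_bound {V : Type*} [Fintype V] [DecidableEq V]
    (G : SimpleGraph V) [DecidableRel G.Adj] {ω : ℝ} (hω : 0 ≤ ω)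
    {f : V → ℝ} (hf : f ∈ Eomega G ω) :
    gnorm ((G.lapMatrix ℝ).mulVec f) ≤ ω * gnorm f := by
  set L := G.lapMatrix ℝ with hLdef
  set p : {μ : ℝ // 0 ≤ μ ∧ μ ≤ ω} → Submodule ℝ (V → ℝ) :=
    fun μ => Module.End.eigenspace L.mulVecLin μ.val with hp
  have hsub : Eomega G ω ≤ ⨆ i, p i := by
    rw [Eomega, Submodule.span_le]
    rintro g ⟨hg0, μ, hμω, hge⟩
    have hgg : 0 < g ⬝ᵥ g :=
      lt_of_le_of_ne (dot_self_nonneg g)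
        (fun h => hg0 (dotProduct_self_eq_zero.mp h.symm))
    have hμ0 : 0 ≤ μ := by
      have hps := (SimpleGraph.posSemidef_lapMatrix ℝ G).dotProduct_mulVec_nonneg g
      rw [star_trivial, hge, dotProduct_smul, smul_eq_mul] at hps
      nlinarith
    have : g ∈ p ⟨μ, hμ0, hμω⟩ := by
      rw [hp, Module.End.mem_eigenspace_iff, Matrix.mulVecLin_apply]
      exact hge
    exact le_iSup p ⟨μ, hμ0, hμω⟩ this
  obtain ⟨d, hd, hdsum⟩ := (Submodule.mem_iSup_iff_exists_finsupp p f).1 (hsub hf)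
  have hfsum : f = ∑ i ∈ d.support, d i := by
    rw [← hdsum]; rfl
  have heig : ∀ i, L.mulVec (d i) = i.val • d i := by
    intro i
    have := hd i
    rw [hp, Module.End.mem_eigenspace_iff, Matrix.mulVecLin_apply] at this
    exact this
  have hLf : L.mulVec f = ∑ i ∈ d.support, i.val • d i := by
    rw [hfsum, ← Matrix.mulVecLin_apply, map_sum]
    exact Finset.sum_congr rfl fun i _ => by rw [Matrix.mulVecLin_apply, heig]
  have horth : ∀ i ∈ d.support, ∀ j ∈ d.support, j ≠ i → d i ⬝ᵥ d j = 0 := by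
    intro i _ j _ hne
    exact eig_orth G (heig i) (heig j) (fun h => hne (Subtype.ext h.symm))
  have hA : (L.mulVec f) ⬝ᵥ (L.mulVec f) = ∑ i ∈ d.support, i.val ^ 2 * (d i ⬝ᵥ d i) := by
    rw [hLf, sum_dot]
    refine Finset.sum_congr rfl fun i hi => ?_
    rw [Finset.sum_eq_single_of_mem i hi
      (fun j hj hne => by rw [smul_dotProduct, dotProduct_smul, horth i hi j hj hne]; simp)]
    rw [smul_dotProduct, dotProduct_smul, smul_eq_mul, smul_eq_mul]; ring
  have hB : f ⬝ᵥ f = ∑ i ∈ d.support, d i ⬝ᵥ d i := by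
    conv_lhs => rw [hfsum, sum_dot]
    refine Finset.sum_congr rfl fun i hi => ?_
    exact Finset.sum_eq_single_of_mem i hi (fun j hj hne => horth i hi j hj hne)
  have hAB : (L.mulVec f) ⬝ᵥ (L.mulVec f) ≤ ω ^ 2 * (f ⬝ᵥ f) := by
    rw [hA, hB, Finset.mul_sum]
    refine Finset.sum_le_sum fun i _ => ?_
    have h1 : i.val ^ 2 ≤ ω ^ 2 := by nlinarith [i.2.1, i.2.2]
    exact mul_le_mul_of_nonneg_right h1 (dot_self_nonneg (d i)) |>.trans_eq rfl
  rw [gnorm_eq_sqrt_dot, gnorm_eq_sqrt_dot]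
  calc Real.sqrt ((L.mulVec f) ⬝ᵥ (L.mulVec f)) ≤ Real.sqrt (ω ^ 2 * (f ⬝ᵥ f)) :=
        Real.sqrt_le_sqrt hAB
    _ = ω * Real.sqrt (f ⬝ᵥ f) := by
        rw [Real.sqrt_mul (sq_nonneg ω), Real.sqrt_sq hω]

/-- If `S = V \ U` is a `Λ`-set and `0 < ω < 1/Λ`, there exist weights `σ_u` such that
the exact cubature formula `∑_{v∈V} f(v) = ∑_{u∈U} f(u) σ_u` holds on `E_ω(L)`. -/
theorem stmt_5 {V : Type*} [Fintype V] [DecidableEq V]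
    (G : SimpleGraph V) [DecidableRel G.Adj]
    (U : Finset V) (Λ : ℝ) (hΛ : 0 < Λ)
    (hS : ∀ φ : V → ℝ, (∀ v ∈ U, φ v = 0) →
      gnorm φ ≤ Λ * gnorm ((G.lapMatrix ℝ).mulVec φ))
    (ω : ℝ) (hω0 : 0 < ω) (hω : ω < 1 / Λ) :
    ∃ σ : V → ℝ, ∀ f ∈ Eomega G ω, ∑ v, f v = ∑ u ∈ U, f u * σ u := by
  classical
  set E := Eomega G ω with hE
  set Rmap : (V → ℝ) →ₗ[ℝ] (↥U → ℝ) := LinearMap.funLeft ℝ ℝ (fun u : ↥U => ↑u) with hR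
  set R' : E →ₗ[ℝ] (↥U → ℝ) := Rmap ∘ₗ E.subtype with hR'
  have hΛω : Λ * ω < 1 := by
    rw [lt_div_iff₀ hΛ] at hω; linarith [hω]
  have hker : LinearMap.ker R' = ⊥ := by
    rw [LinearMap.ker_eq_bot']
    intro x hx
    have hzero : ∀ v ∈ U, (x : V → ℝ) v = 0 := by
      intro v hv
      have := congrFun hx ⟨v, hv⟩
      simpa [hR', hR, LinearMap.funLeft] using this
    have h1 : gnorm (x : V → ℝ) ≤ Λ * gnorm ((G.lapMatrix ℝ).mulVec x) := hS x hzero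
    have h2 : gnorm ((G.lapMatrix ℝ).mulVec x) ≤ ω * gnorm (x : V → ℝ) :=
      lap_bound G hω0.le x.2
    have h3 : gnorm (x : V → ℝ) ≤ Λ * ω * gnorm (x : V → ℝ) := by
      calc gnorm (x : V → ℝ) ≤ Λ * gnorm ((G.lapMatrix ℝ).mulVec x) := h1
        _ ≤ Λ * (ω * gnorm (x : V → ℝ)) := by
            exact mul_le_mul_of_nonneg_left h2 hΛ.le
        _ = Λ * ω * gnorm (x : V → ℝ) := by ring
    have hnn : 0 ≤ gnorm (x : V → ℝ) := Real.sqrt_nonneg _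
    have hzero' : gnorm (x : V → ℝ) = 0 := by nlinarith
    have hsum : ∑ v, (x : V → ℝ) v ^ 2 = 0 := by
      have := Real.sqrt_eq_zero'.mp hzero'
      have hnn2 : 0 ≤ ∑ v, (x : V → ℝ) v ^ 2 :=
        Finset.sum_nonneg fun v _ => sq_nonneg _
      linarith
    have hxf : (x : V → ℝ) = 0 := by
      funext v
      have := (Finset.sum_eq_zero_iff_of_nonneg
        (fun v _ => sq_nonneg ((x : V → ℝ) v))).mp hsum v (Finset.mem_univ v)
      exact pow_eq_zero_iff (by norm_num) |>.mp this
    exact Subtype.ext hxf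
  obtain ⟨g, hg⟩ := R'.exists_leftInverse_of_injective hker
  set sumL : (V → ℝ) →ₗ[ℝ] ℝ := ∑ v, LinearMap.proj v with hsumL
  have hsumL_apply : ∀ h : V → ℝ, sumL h = ∑ v, h v := by
    intro h; simp [hsumL, LinearMap.sum_apply]
  set ℓ : (↥U → ℝ) →ₗ[ℝ] ℝ := sumL ∘ₗ E.subtype ∘ₗ g with hℓ
  refine ⟨fun v => if h : v ∈ U then ℓ (fun j => if (⟨v, h⟩ : ↥U) = j then 1 else 0) else 0,
    fun f hf => ?_⟩
  have hRf : R' ⟨f, hf⟩ = fun u : ↥U => f u := rfl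
  have hginv : g (R' ⟨f, hf⟩) = ⟨f, hf⟩ := by
    have := LinearMap.ext_iff.mp hg ⟨f, hf⟩
    simpa using this
  have hmain : ∑ v, f v = ℓ (fun u : ↥U => f u) := by
    rw [hℓ]
    simp only [LinearMap.comp_apply, ← hRf, hginv]
    rw [hsumL_apply]
    rfl
  rw [hmain, LinearMap.pi_apply_eq_sum_univ ℓ (fun u : ↥U => f ↑u),
    ← Finset.sum_coe_sort U (fun u => f u * if h : u ∈ U then
      ℓ (fun j => if (⟨u, h⟩ : ↥U) = j then 1 else 0) else 0)]
  refine Finset.sum_congr rfl fun i _ => ?_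
  rw [dif_pos i.2, smul_eq_mul]
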